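/- Let μ be a σ-finite measure on (E,𝓔), Q a μ-reversible Markov kernel, π : E → (0,∞) measurable, and α(x,y) = min{1, π(y)/π(x)}. Let P be the Metropolis kernel P(x,A) = δ_x(A)(1 − ∫_E Q(x,dy)α(x,y)) + ∫_A Q(x,dy)α(x,y). Then for every M ∈ ℕ, every x ∈ E and every A ∈ 𝓔: P^M(x,A) ≤ δ_x(A) + Σ_{m=1}^{M} C(M,m) ∫_A α(x,y) Q^m(x,dy), where Q^m is the m-fold composition of Q and C(M,m) the binomial coefficient. (In particular this uses that α satisfies α(x,y)α(y,z) ≤ α(x,z).) -/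

import Mathlib

open MeasureTheory ProbabilityTheory
open scoped ENNReal

/-- The `m`-fold composition of a Markov kernel (`kiter P 0` is the identity kernel). -/
noncomputable def kiter {E : Type*} [MeasurableSpace E] (P : Kernel E E) : ℕ → Kernel E E
  | 0 => Kernel.id
  | n + 1 => P ∘ₖ kiter P n

section Aux

variable {E : Type*} [MeasurableSpace E]

lemma kiter_markov (P : Kernel E E) [IsMarkovKernel P] (n : ℕ) :
    IsMarkovKernel (kiter P n) := by
  induction n with
  | zero => rw [kiter]; infer_instance
  | succ n ih => rw [kiter]; haveI := ih; infer_instance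

lemma kiter_succ_right (P : Kernel E E) [IsSFiniteKernel P] (n : ℕ) :
    kiter P (n + 1) = kiter P n ∘ₖ P := by
  induction n with
  | zero => show P ∘ₖ Kernel.id = Kernel.id ∘ₖ P; rw [Kernel.comp_id, Kernel.id_comp]
  | succ n ih =>
    show P ∘ₖ kiter P (n + 1) = (P ∘ₖ kiter P n) ∘ₖ P
    rw [ih, ← Kernel.comp_assoc]

lemma kiter_one (P : Kernel E E) : kiter P 1 = P := by
  show P ∘ₖ Kernel.id = P; rw [Kernel.comp_id]

lemma alpha_chain (π : E → ℝ≥0∞) (hpos : ∀ x, 0 < π x) (hfin : ∀ x, π x ≠ ⊤) (x z y : E) :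
    min 1 (π z / π x) * min 1 (π y / π z) ≤ min 1 (π y / π x) := by
  refine le_min ?_ ?_
  · calc min 1 (π z / π x) * min 1 (π y / π z) ≤ 1 * 1 :=
        mul_le_mul' (min_le_left _ _) (min_le_left _ _)
      _ = 1 := one_mul 1
  · refine (mul_le_mul' (min_le_right _ _) (min_le_right _ _)).trans (le_of_eq ?_)
    rw [div_eq_mul_inv, div_eq_mul_inv, div_eq_mul_inv]
    calc π z * (π x)⁻¹ * (π y * (π z)⁻¹) = π z * (π z)⁻¹ * (π y * (π x)⁻¹) := by ring
      _ = π y * (π x)⁻¹ := by rw [ENNReal.mul_inv_cancel (hpos z).ne' (hfin z), one_mul]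

lemma icc_sum' (N : ℕ) (f : ℕ → ℝ≥0∞) :
    ∑ m ∈ Finset.Icc 1 N, f m = ∑ i ∈ Finset.range N, f (i+1) := by
  rw [← Finset.Ico_add_one_right_eq_Icc, Finset.sum_Ico_eq_sum_range]
  simp only [Nat.add_sub_cancel]
  exact Finset.sum_congr rfl fun i _ => by rw [Nat.add_comm]

lemma sum_pascal' (M : ℕ) (T : ℕ → ℝ≥0∞) :
    ∑ m ∈ Finset.Icc 1 (M+1), ((M+1).choose m : ℝ≥0∞) * T m
      = ∑ m ∈ Finset.Icc 1 M, (M.choose m : ℝ≥0∞) * T m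
        + (T 1 + ∑ m ∈ Finset.Icc 1 M, (M.choose m : ℝ≥0∞) * T (m+1)) := by
  rw [icc_sum', icc_sum', icc_sum']
  simp_rw [Nat.choose_succ_succ, Nat.cast_add, add_mul]
  rw [Finset.sum_add_distrib]
  nth_rewrite 1 [Finset.sum_range_succ']
  rw [Finset.sum_range_succ]
  simp only [Nat.choose_succ_self, Nat.cast_zero, zero_mul, add_zero, Nat.choose_zero_right,
    Nat.cast_one, one_mul]
  abel

end Aux

/-- The iterates of the Metropolis kernel `P` with proposal `Q` and acceptance probability
`α(x,y) = min{1, π(y)/π(x)}` satisfy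
`P^M(x,A) ≤ δ_x(A) + Σ_{m=1}^M C(M,m) ∫_A α(x,y) Q^m(x,dy)`. -/
theorem stmt_18 {E : Type*} [MeasurableSpace E] (μ : Measure E) [SigmaFinite μ]
    (Q : Kernel E E) [IsMarkovKernel Q]
    (hQrev : ∀ A B : Set E, MeasurableSet A → MeasurableSet B →
      ∫⁻ x in A, Q x B ∂μ = ∫⁻ x in B, Q x A ∂μ)
    (π : E → ℝ≥0∞) (hπ_meas : Measurable π)
    (hπ_pos : ∀ x, 0 < π x) (hπ_fin : ∀ x, π x ≠ ⊤)
    (P : Kernel E E)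
    (hP : ∀ (x : E) (A : Set E), MeasurableSet A →
      P x A = Measure.dirac x A * (1 - ∫⁻ y, min 1 (π y / π x) ∂(Q x))
        + ∫⁻ y in A, min 1 (π y / π x) ∂(Q x)) :
    ∀ (M : ℕ) (x : E) (A : Set E), MeasurableSet A →
      kiter P M x A ≤ Measure.dirac x A
        + ∑ m ∈ Finset.Icc 1 M,
            (M.choose m : ℝ≥0∞) * ∫⁻ y in A, min 1 (π y / π x) ∂(kiter Q m x) := by
  -- notation
  set α : E → E → ℝ≥0∞ := fun x y => min 1 (π y / π x) with hα_def
  haveI hQm : ∀ m, IsMarkovKernel (kiter Q m) := kiter_markov Q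
  -- α is bounded by 1, hence ≠ ⊤
  have hα_le_one : ∀ x y, α x y ≤ 1 := fun x y => min_le_left _ _
  have hα_ne_top : ∀ x y, α x y ≠ ⊤ := fun x y =>
    ne_top_of_le_ne_top ENNReal.one_ne_top (hα_le_one x y)
  -- measurability of α
  have hα_meas : ∀ x, Measurable (α x) := fun x =>
    measurable_const.min (hπ_meas.div measurable_const)
  have hα_meas2 : Measurable (Function.uncurry α) :=
    measurable_const.min ((hπ_meas.comp measurable_snd).div (hπ_meas.comp measurable_fst))
  -- P is a Markov kernel
  have hr_le : ∀ x, (∫⁻ y, α x y ∂(Q x)) ≤ 1 := by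
    intro x
    calc (∫⁻ y, α x y ∂(Q x)) ≤ ∫⁻ _, 1 ∂(Q x) := lintegral_mono fun y => hα_le_one x y
      _ = 1 := by simp
  haveI hPm : IsMarkovKernel P := by
    constructor
    intro x
    constructor
    rw [hP x Set.univ MeasurableSet.univ]
    simp only [measure_univ, one_mul, Measure.restrict_univ]
    exact tsub_add_cancel_of_le (hr_le x)
  -- pointwise domination of P by dirac + withDensity
  have hPle : ∀ z : E, P z ≤ Measure.dirac z + (Q z).withDensity (α z) := by
    intro z
    rw [Measure.le_iff]
    intro s hs
    rw [hP z s hs, Measure.add_apply, withDensity_apply _ hs]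
    refine add_le_add ?_ le_rfl
    calc Measure.dirac z s * (1 - ∫⁻ y, α z y ∂(Q z)) ≤ Measure.dirac z s * 1 :=
        mul_le_mul_right tsub_le_self _
      _ = Measure.dirac z s := mul_one _
  -- main induction
  intro M
  induction M with
  | zero =>
    intro x A hA
    show Kernel.id x A ≤ _
    simp [Kernel.id_apply]
  | succ M ih =>
    intro x A hA
    -- the quantities T m = ∫_A α(x,y) Q^m(x,dy) and g m z = ∫_A α(z,y) Q^m(z,dy)
    set T : ℕ → ℝ≥0∞ := fun m => ∫⁻ y in A, α x y ∂(kiter Q m x) with hT_def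
    set g : ℕ → E → ℝ≥0∞ := fun m z => ∫⁻ y in A, α z y ∂(kiter Q m z) with hg_def
    have hg_meas : ∀ m, Measurable (g m) := by
      intro m
      have h1 : g m = fun z => ∫⁻ y, A.indicator (α z) y ∂(kiter Q m z) :=
        funext fun z => (lintegral_indicator hA _).symm
      rw [h1]
      refine Measurable.lintegral_kernel_prod_right (f := fun z y => A.indicator (α z) y) ?_
      have : (Function.uncurry fun z y => A.indicator (α z) y)
          = {p : E × E | p.2 ∈ A}.indicator (Function.uncurry α) := by
        funext p
        rcases p with ⟨z, y⟩
        by_cases hy : y ∈ A <;> simp [Function.uncurry, Set.indicator, hy]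
      rw [this]
      exact hα_meas2.indicator (measurable_snd hA)
    -- the induction-hypothesis majorant
    set F : E → ℝ≥0∞ := fun z => A.indicator 1 z
      + ∑ m ∈ Finset.Icc 1 M, (M.choose m : ℝ≥0∞) * g m z with hF_def
    have hF_meas : Measurable F := by
      refine (measurable_one.indicator hA).add ?_
      exact Finset.measurable_sum _ fun m _ => (hg_meas m).const_mul _
    have hF_bound : ∀ z, kiter P M z A ≤ F z := by
      intro z
      have := ih z A hA
      rwa [Measure.dirac_apply' z hA] at this
    -- chain inequality: ∫_A α(x,z)α(z,y) ≤ ∫_A α(x,y)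
    have hchain : ∀ m, (∫⁻ z, α x z * g m z ∂(Q x)) ≤ T (m + 1) := by
      intro m
      have h1 : ∀ z, α x z * g m z ≤ ∫⁻ y in A, α x y ∂(kiter Q m z) := by
        intro z
        calc α x z * g m z = ∫⁻ y in A, α x z * α z y ∂(kiter Q m z) :=
            (lintegral_const_mul' _ _ (hα_ne_top x z)).symm
          _ ≤ ∫⁻ y in A, α x y ∂(kiter Q m z) :=
            lintegral_mono fun y => alpha_chain π hπ_pos hπ_fin x z y
      calc (∫⁻ z, α x z * g m z ∂(Q x)) ≤ ∫⁻ z, ∫⁻ y in A, α x y ∂(kiter Q m z) ∂(Q x) :=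
          lintegral_mono h1
        _ = ∫⁻ z, ∫⁻ y, A.indicator (α x) y ∂(kiter Q m z) ∂(Q x) := by
            simp_rw [lintegral_indicator hA]
        _ = ∫⁻ y, A.indicator (α x) y ∂((Q x).bind (kiter Q m)) :=
            (Measure.lintegral_bind (kiter Q m).measurable.aemeasurable ((hα_meas x).indicator hA).aemeasurable).symm
        _ = T (m + 1) := by
            have h2 : kiter Q (m + 1) x = (Q x).bind (kiter Q m) := by
              rw [kiter_succ_right, Kernel.comp_apply]
            simp only [hT_def, h2, lintegral_indicator hA]
    -- the first (dirac) term of the ∫ α·F bound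
    have hdirac_term : (∫⁻ z, α x z * A.indicator 1 z ∂(Q x)) ≤ T 1 := by
      have h1 : ∀ z, α x z * A.indicator 1 z = A.indicator (α x) z := by
        intro z
        by_cases hz : z ∈ A <;> simp [Set.indicator, hz]
      refine le_of_eq ?_
      calc (∫⁻ z, α x z * A.indicator 1 z ∂(Q x)) = ∫⁻ z, A.indicator (α x) z ∂(Q x) := by
            simp_rw [h1]
        _ = ∫⁻ z in A, α x z ∂(Q x) := lintegral_indicator hA _
        _ = T 1 := by simp only [hT_def, kiter_one]
    -- bounding ∫ α(x,z) F z dQ(x,dz)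
    have hcross : (∫⁻ z, α x z * F z ∂(Q x))
        ≤ T 1 + ∑ m ∈ Finset.Icc 1 M, (M.choose m : ℝ≥0∞) * T (m + 1) := by
      have hexp : ∀ z, α x z * F z = α x z * A.indicator 1 z
          + ∑ m ∈ Finset.Icc 1 M, (M.choose m : ℝ≥0∞) * (α x z * g m z) := by
        intro z
        rw [hF_def]
        simp only [mul_add, Finset.mul_sum]
        congr 1
        exact Finset.sum_congr rfl fun m _ => by ring
      calc (∫⁻ z, α x z * F z ∂(Q x))
          = (∫⁻ z, α x z * A.indicator 1 z ∂(Q x))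
            + ∫⁻ z, ∑ m ∈ Finset.Icc 1 M, (M.choose m : ℝ≥0∞) * (α x z * g m z) ∂(Q x) := by
            simp_rw [hexp]
            exact lintegral_add_left ((hα_meas x).mul (measurable_one.indicator hA)) _
        _ = (∫⁻ z, α x z * A.indicator 1 z ∂(Q x))
            + ∑ m ∈ Finset.Icc 1 M, ∫⁻ z, (M.choose m : ℝ≥0∞) * (α x z * g m z) ∂(Q x) := by
            rw [lintegral_finset_sum]
            exact fun m _ => (((hα_meas x).mul (hg_meas m)).const_mul _)
        _ ≤ T 1 + ∑ m ∈ Finset.Icc 1 M, (M.choose m : ℝ≥0∞) * T (m + 1) := by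
            refine add_le_add hdirac_term (Finset.sum_le_sum fun m _ => ?_)
            rw [lintegral_const_mul' _ _ (ENNReal.natCast_ne_top _)]
            exact mul_le_mul_right (hchain m) _
    -- putting everything together
    have hFx : F x = A.indicator 1 x + ∑ m ∈ Finset.Icc 1 M, (M.choose m : ℝ≥0∞) * T m := rfl
    calc kiter P (M + 1) x A = ∫⁻ z, kiter P M z A ∂(P x) := by
          rw [kiter_succ_right, Kernel.comp_apply' _ _ _ hA]
      _ ≤ ∫⁻ z, F z ∂(P x) := lintegral_mono hF_bound
      _ ≤ ∫⁻ z, F z ∂(Measure.dirac x + (Q x).withDensity (α x)) :=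
          lintegral_mono' (hPle x) le_rfl
      _ = F x + ∫⁻ z, α x z * F z ∂(Q x) := by
          rw [lintegral_add_measure, lintegral_dirac' x hF_meas,
            lintegral_withDensity_eq_lintegral_mul _ (hα_meas x) hF_meas]
          rfl
      _ ≤ F x + (T 1 + ∑ m ∈ Finset.Icc 1 M, (M.choose m : ℝ≥0∞) * T (m + 1)) :=
          add_le_add le_rfl hcross
      _ = Measure.dirac x A + ∑ m ∈ Finset.Icc 1 (M + 1), ((M + 1).choose m : ℝ≥0∞) * T m := by
          rw [hFx, sum_pascal' M T, Measure.dirac_apply' x hA, add_assoc]
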